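/- Let δ satisfy 0 < δ < 1/(2 sin(π/7)) − 1. If x ∈ ℝ² and x₁, …, x_J ∈ ℝ² are distinct points with 1 ≤ |x − x_j| ≤ 1+δ for all j and |x_i − x_j| ≥ 1 for all i ≠ j, then J ≤ 6. -/

import Mathlib

open Real

private lemma sin7_ineq : 1 < 4*(Real.sin (π/7))^2 + 2*Real.sin (π/7) := by
  have h1 : π/7 - (π/7)^3/4 < Real.sin (π/7) :=
    by have := Real.sin_gt_sub_cube (x := π/7) (by positivity); nlinarith [pow_pos (show (0:ℝ) < π/7 by positivity) 3]
  have ha1 : (0.4487 : ℝ) < π/7 := by nlinarith [Real.pi_gt_d6]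
  have ha2 : π/7 < (0.45 : ℝ) := by nlinarith [Real.pi_lt_d2]
  have hc : (π/7)^3 < (0.45:ℝ)^3 := pow_lt_pow_left₀ ha2 (by positivity) (by norm_num)
  have h2 : (0.42 : ℝ) < Real.sin (π/7) := by norm_num at hc ⊢; nlinarith
  nlinarith

private lemma chord_sq (z w : ℂ) (hz : z ≠ 0) (hw : w ≠ 0) :
    ‖z - w‖^2 = ‖z‖^2 + ‖w‖^2
      - 2 * ‖z‖ * ‖w‖ * Real.cos (z.arg - w.arg) := by
  have hz' : (0:ℝ) < ‖z‖ := by simpa using hz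
  have hw' : (0:ℝ) < ‖w‖ := by simpa using hw
  have hre : z.re * w.re + z.im * w.im
      = ‖z‖ * ‖w‖ * Real.cos (z.arg - w.arg) := by
    rw [Real.cos_sub, Complex.cos_arg hz, Complex.cos_arg hw, Complex.sin_arg, Complex.sin_arg]
    field_simp
  have h1 := Complex.sq_norm (z - w)
  have h2 := Complex.sq_norm z
  have h3 := Complex.sq_norm w
  simp only [Complex.normSq_apply, Complex.sub_re, Complex.sub_im] at h1 h2 h3
  rw [h1, h2, h3]; linarith [hre]

private lemma arith_lem (t r s : ℝ) (ht : 0 < t) (ht2 : 1 < 4*t^2 + 2*t)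
    (hr : 1 ≤ r) (hs : 1 ≤ s) (hrs : s ≤ r) (hr2 : 2*r*t < 1) (hs2 : 2*s*t < 1) :
    r^2 + s^2 - 1 < 2*r*s*(1 - 2*t^2) := by
  have ha : 0 ≤ 2*t*(r-s) := by nlinarith
  have hab : 2*t*(r-s) + 2*s*t < 1 := by nlinarith
  have hb : 2*t ≤ 2*s*t := by nlinarith
  have h4 : 2*t*(r-s) < 4*t^2 := by linarith
  nlinarith [mul_nonneg ha (by linarith : (0:ℝ) ≤ 1 - 2*s*t - 2*t*(r-s)),
    mul_pos (mul_pos (by nlinarith : (0:ℝ) < 4*t^2) (by nlinarith : (0:ℝ) < 2*s*t))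
      (by linarith : (0:ℝ) < 1 - 2*s*t - 2*t*(r-s)),
    mul_nonneg (by linarith : (0:ℝ) ≤ 4*t^2 - 2*t*(r-s)) (by linarith : (0:ℝ) ≤ 1 - 2*s*t),
    mul_pos ht ht]

private lemma angle_gap (d : ℝ) (h0 : 0 ≤ d) (h2 : d < 2*π)
    (hc : Real.cos d < Real.cos (2*π/7)) : 2*π/7 < d ∧ d < 2*π - 2*π/7 := by
  have hpi := Real.pi_pos
  constructor
  · by_contra h
    push_neg at h
    exact absurd (Real.cos_le_cos_of_nonneg_of_le_pi h0 (by linarith) h) (by linarith)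
  · by_contra h
    push_neg at h
    have he : Real.cos (2*π - d) = Real.cos d := by
      rw [Real.cos_sub]; simp [Real.cos_two_pi, Real.sin_two_pi]
    have := Real.cos_le_cos_of_nonneg_of_le_pi (by linarith : (0:ℝ) ≤ 2*π - d)
      (by linarith : 2*π/7 ≤ π) (by linarith)
    rw [he] at this; linarith

theorem at_most_six_neighbors (δ : ℝ) (hδ0 : 0 < δ)
    (hδ1 : δ < 1 / (2 * Real.sin (π / 7)) - 1)
    (x : EuclideanSpace ℝ (Fin 2)) (J : ℕ)
    (p : Fin J → EuclideanSpace ℝ (Fin 2)) (hinj : Function.Injective p)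
    (hnear : ∀ j, 1 ≤ dist x (p j) ∧ dist x (p j) ≤ 1 + δ)
    (hsep : ∀ i j, i ≠ j → 1 ≤ dist (p i) (p j)) :
    J ≤ 6 := by
  by_contra hJ
  push_neg at hJ
  have h7 : 7 ≤ J := hJ
  have hpi := Real.pi_pos
  set t := Real.sin (π/7) with ht_def
  have ht0 : 0 < t := Real.sin_pos_of_pos_of_lt_pi (by positivity) (by linarith)
  have ht2 : 1 < 4*t^2 + 2*t := sin7_ineq
  -- complex points
  set q : Fin 7 → Fin J := fun k => Fin.castLE h7 k with hq_def
  have hqinj : Function.Injective q := Fin.castLE_injective h7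
  set z : Fin 7 → ℂ := fun k => ⟨p (q k) 0 - x 0, p (q k) 1 - x 1⟩ with hz_def
  have habs : ∀ k, ‖z k‖ = dist x (p (q k)) := by
    intro k
    rw [EuclideanSpace.dist_eq, Complex.norm_def, Complex.normSq_apply]
    rw [Fin.sum_univ_two]
    congr 1
    simp only [hz_def, Real.dist_eq]
    rw [sq_abs, sq_abs]
    ring
  have habs2 : ∀ k l, ‖z k - z l‖ = dist (p (q k)) (p (q l)) := by
    intro k l
    rw [EuclideanSpace.dist_eq, Complex.norm_def, Complex.normSq_apply]
    rw [Fin.sum_univ_two]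
    congr 1
    simp only [hz_def, Complex.sub_re, Complex.sub_im, Real.dist_eq]
    rw [sq_abs, sq_abs]
    ring
  have hzne : ∀ k, z k ≠ 0 := by
    intro k hzk
    have := (hnear (q k)).1
    rw [← habs k, hzk] at this
    simp at this; linarith
  -- radius bounds
  have hRlt : ∀ k, 2 * ‖z k‖ * t < 1 := by
    intro k
    have h1 := (hnear (q k)).2
    have hs : 2 * t > 0 := by linarith
    have : 1 + δ < 1 / (2 * t) := by linarith
    have h2 : ‖z k‖ < 1 / (2*t) := by rw [habs k]; linarith
    calc 2 * ‖z k‖ * t < 2 * (1/(2*t)) * t := by nlinarith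
      _ = 1 := by field_simp
  have hRge : ∀ k, 1 ≤ ‖z k‖ := fun k => by rw [habs k]; exact (hnear (q k)).1
  -- pairwise angle bound
  set θ : Fin 7 → ℝ := fun k => (z k).arg with hθ_def
  have key : ∀ k l, k ≠ l → Real.cos (θ k - θ l) < Real.cos (2*π/7) := by
    intro k l hkl
    have hsep' : 1 ≤ ‖z k - z l‖ := by
      rw [habs2]; exact hsep _ _ (fun h => hkl (hqinj h))
    have hch := chord_sq (z k) (z l) (hzne k) (hzne l)
    have hcos27 : Real.cos (2*π/7) = 1 - 2*t^2 := by
      have : (2:ℝ)*π/7 = 2*(π/7) := by ring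
      rw [this, Real.cos_two_mul', ht_def]
      nlinarith [Real.sin_sq_add_cos_sq (π/7)]
    set r := ‖z k‖
    set s := ‖z l‖
    have hr := hRge k; have hs := hRge l
    have hr2 := hRlt k; have hs2 := hRlt l
    have hrs2 : 0 < 2*r*s := by nlinarith
    have hmain : r^2 + s^2 - 1 < 2*r*s*(1 - 2*t^2) := by
      rcases le_total s r with h | h
      · exact arith_lem t r s ht0 ht2 hr hs h hr2 hs2
      · have := arith_lem t s r ht0 ht2 hs hr h hs2 hr2
        nlinarith
    have h1 : 1 ≤ ‖z k - z l‖^2 := by nlinarith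
    rw [hcos27]
    have : 2*r*s*Real.cos (θ k - θ l) ≤ r^2 + s^2 - 1 := by
      simp only [hθ_def]; nlinarith
    nlinarith
  -- sort the angles
  set σ := Tuple.sort θ with hσ_def
  have hmono : Monotone (θ ∘ σ) := Tuple.monotone_sort θ
  set g : Fin 7 → ℝ := θ ∘ σ with hg_def
  have keyg : ∀ k l : Fin 7, k ≠ l → Real.cos (g k - g l) < Real.cos (2*π/7) := by
    intro k l hkl
    exact key _ _ (fun h => hkl (σ.injective h))
  have hbound : ∀ k, -π < g k ∧ g k ≤ π := by
    intro k
    exact ⟨Complex.neg_pi_lt_arg _, Complex.arg_le_pi _⟩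
  have gap : ∀ k l : Fin 7, k < l → 2*π/7 < g l - g k ∧ g l - g k < 2*π - 2*π/7 := by
    intro k l hkl
    have h0 : 0 ≤ g l - g k := by have := hmono hkl.le; simp only [hg_def] at this ⊢; linarith
    have h2 : g l - g k < 2*π := by
      have := (hbound k).1; have := (hbound l).2; linarith
    have hc : Real.cos (g l - g k) < Real.cos (2*π/7) := keyg l k (by omega)
    exact angle_gap _ h0 h2 hc
  have h01 := (gap 0 1 (by decide)).1
  have h12 := (gap 1 2 (by decide)).1
  have h23 := (gap 2 3 (by decide)).1
  have h34 := (gap 3 4 (by decide)).1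
  have h45 := (gap 4 5 (by decide)).1
  have h56 := (gap 5 6 (by decide)).1
  have h06 := (gap 0 6 (by decide)).2
  linarith
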